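/- arXiv:2401.10459 — 2 statements merged into one kernel-verified Lean document; each statement's English description precedes it below -/
import Mathlib

section
/- If a completely regular Hausdorff space X has a dense countably compact subspace, then X is Grothendieck; that is, Cp(X) is a hereditary g-space. -/
open Set Filter Topology

def IsLimitPointOf {Z : Type*} [TopologicalSpace Z] (x : Z) (S : Set Z) : Prop :=
  ∀ U : Set Z, IsOpen U → x ∈ U → (S ∩ U).Infinite

def CountablyCompactIn {Z : Type*} [TopologicalSpace Z] (A B : Set Z) : Prop :=
  ∀ S ⊆ A, S.Infinite → ∃ x ∈ B, IsLimitPointOf x S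

def IsGSpace (Y : Type*) [TopologicalSpace Y] : Prop :=
  ∀ A : Set Y, CountablyCompactIn A Set.univ → IsCompact (closure A)

def IsHereditaryGSpace (Y : Type*) [TopologicalSpace Y] : Prop :=
  ∀ B : Set Y, IsGSpace B

def Cp (X : Type*) [TopologicalSpace X] : Type _ := {f : X → ℝ // Continuous f}

instance (X : Type*) [TopologicalSpace X] : TopologicalSpace (Cp X) :=
  inferInstanceAs (TopologicalSpace {f : X → ℝ // Continuous f})

def CpI (X : Type*) [TopologicalSpace X] : Type _ := {f : X → unitInterval // Continuous f}

instance (X : Type*) [TopologicalSpace X] : TopologicalSpace (CpI X) :=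
  inferInstanceAs (TopologicalSpace {f : X → unitInterval // Continuous f})

def CountablyTight (X : Type*) [TopologicalSpace X] : Prop :=
  ∀ (A : Set X) (x : X), x ∈ closure A → ∃ B ⊆ A, B.Countable ∧ x ∈ closure B

def CountablyCompactSpace' (Y : Type*) [TopologicalSpace Y] : Prop :=
  ∀ S : Set Y, S.Infinite → ∃ x : Y, IsLimitPointOf x S

def DULC {X : Type*} [TopologicalSpace X] (A : Set (CpI X)) : Prop :=
  ∀ (f : ℕ → CpI X), (∀ n, f n ∈ A) → ∀ (x : ℕ → X) (𝒰 𝒱 : Ultrafilter ℕ),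
    (∃ y : X, Filter.Tendsto x (𝒱 : Filter ℕ) (nhds y)) →
    ∀ (g h : ℕ → unitInterval) (u v : unitInterval),
      (∀ n, Filter.Tendsto (fun m => (f n).1 (x m)) (𝒱 : Filter ℕ) (nhds (g n))) →
      Filter.Tendsto g (𝒰 : Filter ℕ) (nhds u) →
      (∀ m, Filter.Tendsto (fun n => (f n).1 (x m)) (𝒰 : Filter ℕ) (nhds (h m))) →
      Filter.Tendsto h (𝒱 : Filter ℕ) (nhds v) →
      u = v

def DLC {X : Type*} [TopologicalSpace X] (A : Set (CpI X)) : Prop :=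
  ∀ (f : ℕ → CpI X), (∀ n, f n ∈ A) → ∀ (x : ℕ → X),
    ∀ (g h : ℕ → unitInterval) (u v : unitInterval),
      (∀ n, Filter.Tendsto (fun m => (f n).1 (x m)) Filter.atTop (nhds (g n))) →
      Filter.Tendsto g Filter.atTop (nhds u) →
      (∀ m, Filter.Tendsto (fun n => (f n).1 (x m)) Filter.atTop (nhds (h m))) →
      Filter.Tendsto h Filter.atTop (nhds v) →
      u = v



set_option linter.unusedSectionVars false
set_option maxHeartbeats 1000000

section Aux

variable {X : Type*} [TopologicalSpace X]

private lemma eq_of_abs_sub_lt' {a b : ℝ} (h : ∀ δ : ℝ, 0 < δ → |a - b| < δ) : a = b := by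
  by_contra hne
  exact lt_irrefl _ (h _ (abs_pos.2 (sub_ne_zero.2 (fun hc => hne hc))))

private lemma isOpen_ball_pi (s : Finset X) (φ : X → ℝ) (δ : ℝ) :
    IsOpen {h : X → ℝ | ∀ x ∈ s, |h x - φ x| < δ} := by
  have he : {h : X → ℝ | ∀ x ∈ s, |h x - φ x| < δ}
      = ⋂ x ∈ s, (fun h : X → ℝ => h x) ⁻¹' Metric.ball (φ x) δ := by
    ext h
    simp [Real.dist_eq]
  rw [he]
  exact isOpen_biInter_finset fun x _ =>
    (Metric.isOpen_ball).preimage (continuous_apply x)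

private lemma exists_close {A : Set (X → ℝ)} {g : X → ℝ} (hg : g ∈ closure A) (s : Finset X)
    {δ : ℝ} (hδ : 0 < δ) : ∃ f ∈ A, ∀ x ∈ s, |f x - g x| < δ := by
  have ho := isOpen_ball_pi s g δ
  have hgo : g ∈ {h : X → ℝ | ∀ x ∈ s, |h x - g x| < δ} := fun x _ => by simpa using hδ
  obtain ⟨f, hfU, hfA⟩ := mem_closure_iff.1 hg _ ho hgo
  exact ⟨f, hfA, hfU⟩

private lemma fiber_or_range {γ : Type*} (f : ℕ → γ) :
    (∃ v, {n | f n = v}.Infinite) ∨ (Set.range f).Infinite := by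
  by_cases h : (Set.range f).Finite
  · left
    by_contra hno
    push_neg at hno
    have hcov : (Set.univ : Set ℕ) ⊆ ⋃ v ∈ Set.range f, {n | f n = v} := by
      intro n _
      exact Set.mem_biUnion (Set.mem_range_self n) rfl
    exact Set.infinite_univ (Set.Finite.subset (h.biUnion fun v _ => hno v) hcov)
  · right
    exact h

private lemma exists_ge_of_infinite (s : Set ℕ) (hs : s.Infinite) (N : ℕ) : ∃ n ∈ s, N ≤ n := by
  obtain ⟨n, hn, hlt⟩ := hs.exists_gt N
  exact ⟨n, hn, hlt.le⟩

private lemma one_div_small : ∀ {δ : ℝ}, 0 < δ → ∃ N : ℕ, ∀ n : ℕ, N ≤ n → 1 / ((n : ℝ) + 1) < δ := by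
  intro δ hδ
  obtain ⟨N, hN⟩ := exists_nat_one_div_lt hδ
  refine ⟨N, fun n hn => lt_of_le_of_lt ?_ hN⟩
  apply one_div_le_one_div_of_le
  · positivity
  · exact_mod_cast Nat.succ_le_succ hn

end Aux

section Groth

variable {X : Type*} [TopologicalSpace X] {D : Set X} {A B : Set (X → ℝ)}

/-- From a `CountablyCompactSpace'` we can extract cluster points of arbitrary sequences. -/
private lemma cluster_of_cc {Y : Type*} [TopologicalSpace Y] (hcc : CountablyCompactSpace' Y)
    (d : ℕ → Y) : ∃ p : Y, ∀ U : Set Y, IsOpen U → p ∈ U → {n | d n ∈ U}.Infinite := by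
  rcases fiber_or_range d with ⟨v, hv⟩ | hr
  · refine ⟨v, fun U _ hvU => hv.mono fun n hn => ?_⟩
    rw [Set.mem_setOf_eq] at hn ⊢
    rw [hn]
    exact hvU
  · obtain ⟨p, hp⟩ := hcc _ hr
    refine ⟨p, fun U hU hpU => ?_⟩
    have h2 := hp U hU hpU
    intro hfin
    refine h2 (Set.Finite.subset (hfin.image d) ?_)
    rintro y ⟨⟨n, rfl⟩, hyU⟩
    exact ⟨n, hyU, rfl⟩

/-- Cluster points at the level of `X` from cluster points in the subspace `D`. -/
private lemma cluster_point_X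
    (hcld : ∀ d : ℕ → D, ∃ p : D, ∀ U : Set D, IsOpen U → p ∈ U → {n | d n ∈ U}.Infinite)
    (d : ℕ → X) (hd : ∀ n, d n ∈ D) :
    ∃ p ∈ D, ∀ V : Set X, IsOpen V → p ∈ V → {n | d n ∈ V}.Infinite := by
  obtain ⟨p, hp⟩ := hcld fun n => ⟨d n, hd n⟩
  refine ⟨p.1, p.2, fun V hV hpV => ?_⟩
  have := hp (Subtype.val ⁻¹' V) (hV.preimage continuous_subtype_val) hpV
  simpa using this

/-- Cluster "functions" for sequences in `A`, lying in `B`. -/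
private lemma cluster_fn (hAB : A ⊆ B)
    (hccPi : ∀ S ⊆ A, S.Infinite → ∃ φ ∈ B, ∀ U : Set (X → ℝ), IsOpen U → φ ∈ U → (S ∩ U).Infinite)
    (a : ℕ → X → ℝ) (ha : ∀ n, a n ∈ A) :
    ∃ φ ∈ B, ∀ U : Set (X → ℝ), IsOpen U → φ ∈ U → {n | a n ∈ U}.Infinite := by
  rcases fiber_or_range a with ⟨v, hv⟩ | hr
  · have hvA : v ∈ A := by
      obtain ⟨n, hn⟩ := hv.nonempty
      exact hn ▸ ha n
    refine ⟨v, hAB hvA, fun U _ hvU => hv.mono fun n hn => ?_⟩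
    rw [Set.mem_setOf_eq] at hn ⊢
    rw [hn]
    exact hvU
  · obtain ⟨φ, hφB, hφ⟩ := hccPi (Set.range a) (Set.range_subset_iff.2 ha) hr
    refine ⟨φ, hφB, fun U hU hφU => ?_⟩
    intro hfin
    refine hφ U hU hφU (Set.Finite.subset (hfin.image a) ?_)
    rintro y ⟨⟨n, rfl⟩, hyU⟩
    exact ⟨n, hyU, rfl⟩

private lemma contOn_of_closure
    (hBc : ∀ φ ∈ B, Continuous φ) (hAB : A ⊆ B)
    (hclf : ∀ a : ℕ → X → ℝ, (∀ n, a n ∈ A) →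
      ∃ φ ∈ B, ∀ U : Set (X → ℝ), IsOpen U → φ ∈ U → {n | a n ∈ U}.Infinite)
    (hcldX : ∀ d : ℕ → X, (∀ n, d n ∈ D) →
      ∃ p ∈ D, ∀ V : Set X, IsOpen V → p ∈ V → {n | d n ∈ V}.Infinite)
    {g : X → ℝ} (hg : g ∈ closure A) : ContinuousOn g D := by
  classical
  intro x₀ hx₀
  show Filter.Tendsto g (nhdsWithin x₀ D) (nhds (g x₀))
  rw [Metric.tendsto_nhds]
  by_contra hcon
  push_neg at hcon
  obtain ⟨ε, hε, hbad0⟩ := hcon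
  have hbad : ∀ V : Set X, IsOpen V → x₀ ∈ V → ∃ x, x ∈ V ∧ x ∈ D ∧ ε ≤ |g x - g x₀| := by
    intro V hV hx₀V
    by_contra h
    push_neg at h
    apply hbad0
    rw [Filter.eventually_iff, mem_nhdsWithin]
    refine ⟨V, hV, hx₀V, ?_⟩
    rintro x ⟨hxV, hxD⟩
    have := h x hxV hxD
    simpa [Real.dist_eq] using this
  set ε' : ℝ := ε / 8 with hε'def
  have hε' : 0 < ε' := by positivity
  -- pairs (f, x)
  set P : (X → ℝ) × X → Prop := fun q =>
    q.1 ∈ A ∧ q.2 ∈ D ∧ ε ≤ |g q.2 - g x₀| ∧ |q.1 x₀ - g x₀| < ε' ∧ |q.1 q.2 - q.1 x₀| < ε'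
    with hP
  set r : (X → ℝ) × X → (X → ℝ) × X → Prop := fun q q' =>
    |q'.1 q.2 - g q.2| < ε' ∧ |q.1 q'.2 - q.1 x₀| < ε' with hr
  have hsel : ∀ s : Finset ((X → ℝ) × X), (∀ q ∈ s, P q) → ∃ q', P q' ∧ ∀ q ∈ s, r q q' := by
    intro s hs
    obtain ⟨f', hf'A, hf'close⟩ := exists_close hg (insert x₀ (s.image Prod.snd)) hε'
    have hf'c : Continuous f' := hBc f' (hAB hf'A)
    set V : Set X := {x | |f' x - f' x₀| < ε'} ∩ ⋂ q ∈ s, {x | |q.1 x - q.1 x₀| < ε'} with hV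
    have hVo : IsOpen V := by
      apply IsOpen.inter
      · have : {x | |f' x - f' x₀| < ε'} = f' ⁻¹' Metric.ball (f' x₀) ε' := by
          ext x; simp [Real.dist_eq]
        rw [this]
        exact Metric.isOpen_ball.preimage hf'c
      · refine isOpen_biInter_finset fun q hq => ?_
        have hqc : Continuous q.1 := hBc _ (hAB (hs q hq).1)
        have : {x | |q.1 x - q.1 x₀| < ε'} = q.1 ⁻¹' Metric.ball (q.1 x₀) ε' := by
          ext x; simp [Real.dist_eq]
        rw [this]
        exact Metric.isOpen_ball.preimage hqc
    have hx₀V : x₀ ∈ V := by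
      constructor
      · simpa using hε'
      · refine Set.mem_biInter fun q hq => ?_
        simpa using hε'
    obtain ⟨x', hx'V, hx'D, hx'far⟩ := hbad V hVo hx₀V
    refine ⟨(f', x'), ⟨hf'A, hx'D, hx'far, ?_, ?_⟩, ?_⟩
    · exact hf'close x₀ (Finset.mem_insert_self _ _)
    · exact hx'V.1
    · intro q hq
      constructor
      · exact hf'close q.2 (Finset.mem_insert_of_mem (Finset.mem_image_of_mem Prod.snd hq))
      · have := hx'V.2
        rw [Set.mem_iInter₂] at this
        exact this q hq
  obtain ⟨q, hPq, hrq⟩ := exists_seq_of_forall_finset_exists P r hsel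
  set f : ℕ → X → ℝ := fun n => (q n).1 with hf
  set x : ℕ → X := fun n => (q n).2 with hx
  have hfa : ∀ n, f n ∈ A := fun n => (hPq n).1
  have hxD : ∀ n, x n ∈ D := fun n => (hPq n).2.1
  have hxS : ∀ n, ε ≤ |g (x n) - g x₀| := fun n => (hPq n).2.2.1
  have hfx₀ : ∀ n, |f n x₀ - g x₀| < ε' := fun n => (hPq n).2.2.2.1
  have hii : ∀ i n, i ≤ n → |f i (x n) - f i x₀| < ε' := by
    intro i n h
    rcases lt_or_eq_of_le h with h | h
    · exact (hrq i n h).2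
    · subst h
      exact (hPq i).2.2.2.2
  have hcol : ∀ k m, k < m → |f m (x k) - g (x k)| < ε' := fun k m h => (hrq k m h).1
  obtain ⟨φ, hφB, hφcl⟩ := hclf f hfa
  have hφc : Continuous φ := hBc φ hφB
  obtain ⟨y, hyD, hycl⟩ := hcldX x hxD
  -- (c1)
  have hc1 : ∀ i, |f i y - f i x₀| ≤ 2 * ε' := by
    intro i
    have hci : Continuous (f i) := hBc _ (hAB (hfa i))
    have hVi : IsOpen {z | |f i z - f i y| < ε'} := by
      have : {z | |f i z - f i y| < ε'} = f i ⁻¹' Metric.ball (f i y) ε' := by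
        ext z; simp [Real.dist_eq]
      rw [this]
      exact Metric.isOpen_ball.preimage hci
    have hinf := hycl _ hVi (by simpa using hε')
    obtain ⟨n, hn, hni⟩ := exists_ge_of_infinite _ hinf i
    have h1 : |f i (x n) - f i y| < ε' := hn
    calc |f i y - f i x₀| ≤ |f i y - f i (x n)| + |f i (x n) - f i x₀| := abs_sub_le _ _ _
      _ ≤ ε' + ε' := by
          have h1' : |f i y - f i (x n)| < ε' := abs_sub_comm (f i (x n)) (f i y) ▸ h1
          have h2 := hii i n hni
          linarith
      _ = 2 * ε' := by ring
  -- (c2)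
  have hφy : |φ y - g x₀| ≤ 4 * ε' := by
    have hinf := hφcl _ (isOpen_ball_pi ({x₀, y} : Finset X) φ ε')
      (fun z _ => by simpa using hε')
    obtain ⟨i, hi⟩ := hinf.nonempty
    have hi1 : |f i x₀ - φ x₀| < ε' := hi x₀ (by simp)
    have hi2 : |f i y - φ y| < ε' := hi y (by simp)
    have t1 : |φ y - f i y| < ε' := abs_sub_comm (f i y) (φ y) ▸ hi2
    calc |φ y - g x₀| ≤ |φ y - f i y| + |f i y - g x₀| := abs_sub_le _ _ _
      _ ≤ |φ y - f i y| + (|f i y - f i x₀| + |f i x₀ - g x₀|) := by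
          linarith [abs_sub_le (f i y) (f i x₀) (g x₀)]
      _ ≤ ε' + (2 * ε' + ε') := by
          have := hc1 i
          have := hfx₀ i
          linarith
      _ = 4 * ε' := by ring
  -- (c3)
  have hVy : IsOpen {z | |φ z - φ y| < ε'} := by
    have : {z | |φ z - φ y| < ε'} = φ ⁻¹' Metric.ball (φ y) ε' := by
      ext z; simp [Real.dist_eq]
    rw [this]
    exact Metric.isOpen_ball.preimage hφc
  obtain ⟨k, hk⟩ := (hycl _ hVy (by simpa using hε')).nonempty
  have hk1 : |φ (x k) - φ y| < ε' := hk
  -- (c4)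
  have hinfk := hφcl _ (isOpen_ball_pi ({x k} : Finset X) φ ε') (fun z _ => by simpa using hε')
  obtain ⟨m, hm, hkm⟩ := exists_ge_of_infinite _ hinfk (k + 1)
  have hm1 : |f m (x k) - φ (x k)| < ε' := hm (x k) (by simp)
  have hm2 : |f m (x k) - g (x k)| < ε' := hcol k m (Nat.lt_of_lt_of_le (Nat.lt_succ_self k) hkm)
  have hchain : |g (x k) - g x₀| < 8 * ε' := by
    calc |g (x k) - g x₀| ≤ |g (x k) - φ (x k)| + |φ (x k) - g x₀| := abs_sub_le _ _ _
      _ ≤ |g (x k) - φ (x k)| + (|φ (x k) - φ y| + |φ y - g x₀|) := by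
          linarith [abs_sub_le (φ (x k)) (φ y) (g x₀)]
      _ ≤ 2 * ε' + (ε' + 4 * ε') := by
          have hgk : |g (x k) - φ (x k)| ≤ 2 * ε' := by
            calc |g (x k) - φ (x k)| ≤ |g (x k) - f m (x k)| + |f m (x k) - φ (x k)| :=
                  abs_sub_le _ _ _
              _ ≤ 2 * ε' := by
                  have := abs_sub_comm (f m (x k)) (g (x k)) ▸ hm2
                  linarith
          linarith
      _ < 8 * ε' := by linarith
  have : ε ≤ |g (x k) - g x₀| := hxS k
  rw [hε'def] at hchain
  linarith

private lemma net_lemma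
    (hcld : ∀ d : ℕ → D, ∃ p : D, ∀ U : Set D, IsOpen U → p ∈ U → {n | d n ∈ U}.Infinite)
    (m : ℕ) (h : Fin m → X → ℝ) (hc : ∀ j, ContinuousOn (h j) D) {δ : ℝ} (hδ : 0 < δ) :
    ∃ F : Finset X, ↑F ⊆ D ∧ ∀ x ∈ D, ∃ y ∈ F, ∀ j, |h j x - h j y| < δ := by
  classical
  by_contra hno
  push_neg at hno
  have hsel : ∀ s : Finset X, (∀ z ∈ s, z ∈ D) →
      ∃ y, y ∈ D ∧ ∀ z ∈ s, ∃ j, δ ≤ |h j z - h j y| := by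
    intro s hs
    obtain ⟨x, hxD, hx⟩ := hno s (fun z hz => hs z (Finset.mem_coe.1 hz))
    refine ⟨x, hxD, fun z hz => ?_⟩
    obtain ⟨j, hj⟩ := hx z hz
    exact ⟨j, abs_sub_comm (h j x) (h j z) ▸ hj⟩
  obtain ⟨d, hdD, hdr⟩ := exists_seq_of_forall_finset_exists (· ∈ D) _ hsel
  obtain ⟨p, hp⟩ := hcld fun n => ⟨d n, hdD n⟩
  set U : Set D := ⋂ j, {z : D | |h j z - h j p| < δ / 2} with hU
  have hUo : IsOpen U := by
    refine isOpen_iInter_of_finite fun j => ?_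
    have : {z : D | |h j z - h j p| < δ / 2}
        = (D.restrict (h j)) ⁻¹' Metric.ball (h j p) (δ / 2) := by
      ext z; simp [Real.dist_eq, Set.restrict]
    rw [this]
    exact Metric.isOpen_ball.preimage (ContinuousOn.restrict (hc j))
  have hpU : p ∈ U := by
    refine Set.mem_iInter.2 fun j => ?_
    simpa using half_pos hδ
  have hinf := hp U hUo hpU
  obtain ⟨n₁, hn₁⟩ := hinf.nonempty
  obtain ⟨n₂, hn₂, hgt⟩ := hinf.exists_gt n₁
  obtain ⟨j, hj⟩ := hdr n₁ n₂ hgt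
  have b1 : |h j (d n₁) - h j p| < δ / 2 := by
    have := Set.mem_iInter.1 hn₁ j
    simpa using this
  have b2 : |h j (d n₂) - h j p| < δ / 2 := by
    have := Set.mem_iInter.1 hn₂ j
    simpa using this
  have : |h j (d n₁) - h j (d n₂)| < δ := by
    calc |h j (d n₁) - h j (d n₂)|
        ≤ |h j (d n₁) - h j p| + |h j p - h j (d n₂)| := abs_sub_le _ _ _
      _ < δ / 2 + δ / 2 := by
          have b2' : |h j p - h j (d n₂)| < δ / 2 := abs_sub_comm (h j (d n₂)) (h j p) ▸ b2
          linarith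
      _ = δ := by ring
  exact absurd this (not_lt.2 hj)

private lemma key_lemma
    (hBc : ∀ φ ∈ B, Continuous φ) (hAB : A ⊆ B)
    (hclf : ∀ a : ℕ → X → ℝ, (∀ n, a n ∈ A) →
      ∃ φ ∈ B, ∀ U : Set (X → ℝ), IsOpen U → φ ∈ U → {n | a n ∈ U}.Infinite)
    (hcld : ∀ d : ℕ → D, ∃ p : D, ∀ U : Set D, IsOpen U → p ∈ U → {n | d n ∈ U}.Infinite)
    {g : X → ℝ} (hg : g ∈ closure A) (x₀ : X) :
    ∃ φ ∈ B, Set.EqOn φ g D ∧ φ x₀ = g x₀ := by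
  classical
  have hcldX := cluster_point_X hcld
  have hgD : ContinuousOn g D := contOn_of_closure hBc hAB hclf hcldX hg
  -- one recursion step
  have hstep : ∀ (n : ℕ) (s : Finset X × (ℕ → X → ℝ)),
      ∃ t : Finset X × (ℕ → X → ℝ),
        ((↑s.1 ⊆ D ∧ ∀ i < n, s.2 i ∈ A) →
          (s.1 ⊆ t.1 ∧ ↑t.1 ⊆ D ∧
           (∀ x ∈ D, ∃ y ∈ t.1,
             |g x - g y| < 1 / (n + 1) ∧ ∀ i < n, |s.2 i x - s.2 i y| < 1 / (n + 1)) ∧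
           (∀ i < n, t.2 i = s.2 i) ∧
           t.2 n ∈ A ∧ (∀ w ∈ t.1, |t.2 n w - g w| < 1 / (n + 1)) ∧
           |t.2 n x₀ - g x₀| < 1 / (n + 1))) := by
    intro n s
    by_cases hins : ↑s.1 ⊆ D ∧ ∀ i < n, s.2 i ∈ A
    · obtain ⟨hsD, hsA⟩ := hins
      have hδ : (0 : ℝ) < 1 / (n + 1) := by positivity
      set hfun : Fin (n + 1) → X → ℝ := fun j => if hj : (j : ℕ) < n then s.2 j else g with hhfun
      have hcont : ∀ j, ContinuousOn (hfun j) D := by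
        intro j
        by_cases hj : (j : ℕ) < n
        · simp only [hhfun, dif_pos hj]
          exact (hBc _ (hAB (hsA j hj))).continuousOn
        · simp only [hhfun, dif_neg hj]
          exact hgD
      obtain ⟨F₀, hF₀D, hF₀⟩ := net_lemma hcld (n + 1) hfun hcont hδ
      obtain ⟨fnew, hfA, hfc⟩ := exists_close hg (insert x₀ (s.1 ∪ F₀)) hδ
      refine ⟨(s.1 ∪ F₀, Function.update s.2 n fnew), fun _ => ?_⟩
      refine ⟨Finset.subset_union_left, ?_, ?_, ?_, ?_, ?_, ?_⟩
      · intro z hz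
        rw [Finset.coe_union, Set.mem_union] at hz
        rcases hz with hz | hz
        · exact hsD hz
        · exact hF₀D hz
      · intro x hx
        obtain ⟨y, hyF₀, hy⟩ := hF₀ x hx
        refine ⟨y, Finset.mem_union_right _ hyF₀, ?_, ?_⟩
        · have := hy ⟨n, Nat.lt_succ_self n⟩
          simpa [hhfun] using this
        · intro i hi
          have := hy ⟨i, Nat.lt_succ_of_lt hi⟩
          simpa [hhfun, hi] using this
      · intro i hi
        exact Function.update_of_ne (Nat.ne_of_lt hi) fnew s.2
      · show Function.update s.2 n fnew n ∈ A
        rw [Function.update_self]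
        exact hfA
      · intro w hw
        show |Function.update s.2 n fnew n w - g w| < 1 / (n + 1)
        rw [Function.update_self]
        exact hfc w (Finset.mem_insert_of_mem hw)
      · show |Function.update s.2 n fnew n x₀ - g x₀| < 1 / (n + 1)
        rw [Function.update_self]
        exact hfc x₀ (Finset.mem_insert_self _ _)
    · exact ⟨s, fun hc => absurd hc hins⟩
  choose step hstepspec using hstep
  set σ : ℕ → Finset X × (ℕ → X → ℝ) := fun n =>
    Nat.rec (motive := fun _ => Finset X × (ℕ → X → ℝ)) (∅, fun _ _ => 0)
      (fun k s => step k s) n with hσ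
  have hσsucc : ∀ n, σ (n + 1) = step n (σ n) := fun n => rfl
  set F : ℕ → Finset X := fun n => (σ (n + 1)).1 with hF
  set a : ℕ → X → ℝ := fun n => (σ (n + 1)).2 n with ha
  have hinv : ∀ n, ↑(σ n).1 ⊆ D ∧ ∀ i < n, (σ n).2 i ∈ A := by
    intro n
    induction n with
    | zero =>
      constructor
      · simp [hσ]
      · intro i hi
        omega
    | succ n ih =>
      have hs := hstepspec n (σ n) ih
      rw [← hσsucc n] at hs
      refine ⟨hs.2.1, ?_⟩
      intro i hi
      rcases Nat.lt_succ_iff_lt_or_eq.1 hi with hi | rfl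
      · rw [hs.2.2.2.1 i hi]
        exact ih.2 i hi
      · exact hs.2.2.2.2.1
  have hstepn : ∀ n, (σ n).1 ⊆ (σ (n+1)).1 ∧ ↑(σ (n+1)).1 ⊆ D ∧
      (∀ x ∈ D, ∃ y ∈ (σ (n+1)).1,
        |g x - g y| < 1 / (n + 1) ∧ ∀ i < n, |(σ n).2 i x - (σ n).2 i y| < 1 / (n + 1)) ∧
      (∀ i < n, (σ (n+1)).2 i = (σ n).2 i) ∧
      (σ (n+1)).2 n ∈ A ∧ (∀ w ∈ (σ (n+1)).1, |(σ (n+1)).2 n w - g w| < 1 / (n + 1)) ∧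
      |(σ (n+1)).2 n x₀ - g x₀| < 1 / (n + 1) := by
    intro n
    have := hstepspec n (σ n) (hinv n)
    rw [← hσsucc n] at this
    exact this
  have hstab : ∀ i n, i ≤ n → (σ (n + 1)).2 i = a i := by
    intro i n hin
    induction n with
    | zero =>
      have : i = 0 := Nat.le_zero.1 hin
      subst this
      rfl
    | succ n ih =>
      rcases Nat.lt_succ_iff_lt_or_eq.1 (Nat.lt_succ_of_le hin) with hi | rfl
      · have h1 := (hstepn (n + 1)).2.2.2.1 i hi
        rw [h1, ih (Nat.lt_succ_iff.1 hi)]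
      · rfl
  have hFD : ∀ n, ↑(F n) ⊆ D := fun n => (hinv (n + 1)).1
  have haA : ∀ n, a n ∈ A := fun n => (hstepn n).2.2.2.2.1
  have haF : ∀ n, ∀ w ∈ F n, |a n w - g w| < 1 / (n + 1) := fun n => (hstepn n).2.2.2.2.2.1
  have hax₀ : ∀ n, |a n x₀ - g x₀| < 1 / (n + 1) := fun n => (hstepn n).2.2.2.2.2.2
  have hnet : ∀ n, ∀ x ∈ D, ∃ y ∈ F n,
      |g x - g y| < 1 / (n + 1) ∧ ∀ i < n, |a i x - a i y| < 1 / (n + 1) := by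
    intro n x hx
    obtain ⟨y, hyF, h1, h2⟩ := (hstepn n).2.2.1 x hx
    refine ⟨y, hyF, h1, ?_⟩
    intro i hi
    have h3 := h2 i hi
    cases n with
    | zero => omega
    | succ m => rwa [hstab i m (Nat.lt_succ_iff.1 hi)] at h3
  have hFmono : ∀ n m, n ≤ m → F n ⊆ F m := by
    intro n m h
    induction m with
    | zero =>
      have h0 : n = 0 := Nat.le_zero.1 h
      subst h0
      exact Finset.Subset.refl _
    | succ k ih =>
      rcases Nat.lt_succ_iff_lt_or_eq.1 (Nat.lt_succ_of_le h) with h' | rfl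
      · exact (ih (Nat.lt_succ_iff.1 h')).trans (hstepn (k + 1)).1
      · exact Finset.Subset.refl _
  have hconv : ∀ n, ∀ w ∈ F n, ∀ m, n ≤ m → |a m w - g w| < 1 / (m + 1) :=
    fun n w hw m hm => haF m w (hFmono n m hm hw)
  obtain ⟨φ, hφB, hφcl⟩ := hclf a haA
  have hφc : Continuous φ := hBc φ hφB
  have hφfin : ∀ (s : Finset X) {δ : ℝ}, 0 < δ → {n | ∀ z ∈ s, |a n z - φ z| < δ}.Infinite :=
    fun s δ hδ => hφcl _ (isOpen_ball_pi s φ δ) (fun z _ => by simpa using hδ)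
  -- Claim A
  have hA0 : φ x₀ = g x₀ := by
    apply eq_of_abs_sub_lt'
    intro δ hδ
    obtain ⟨N, hN⟩ := one_div_small (half_pos hδ)
    obtain ⟨n, hn, hNn⟩ := exists_ge_of_infinite _ (hφfin {x₀} (half_pos hδ)) N
    have h1 : |a n x₀ - φ x₀| < δ / 2 := hn x₀ (by simp)
    have h2 : |a n x₀ - g x₀| < δ / 2 := lt_trans (hax₀ n) (hN n hNn)
    calc |φ x₀ - g x₀| ≤ |φ x₀ - a n x₀| + |a n x₀ - g x₀| := abs_sub_le _ _ _
      _ < δ / 2 + δ / 2 := by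
          have h1' : |φ x₀ - a n x₀| < δ / 2 := abs_sub_comm (a n x₀) (φ x₀) ▸ h1
          linarith
      _ = δ := by ring
  -- Claim B
  have hB0 : ∀ n₀, ∀ w ∈ F n₀, φ w = g w := by
    intro n₀ w hw
    apply eq_of_abs_sub_lt'
    intro δ hδ
    obtain ⟨N, hN⟩ := one_div_small (half_pos hδ)
    obtain ⟨n, hn, hNn⟩ := exists_ge_of_infinite _ (hφfin {w} (half_pos hδ)) (max N n₀)
    have h1 : |a n w - φ w| < δ / 2 := hn w (by simp)
    have h2 : |a n w - g w| < δ / 2 :=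
      lt_trans (hconv n₀ w hw n (le_trans (le_max_right N n₀) hNn))
        (hN n (le_trans (le_max_left N n₀) hNn))
    calc |φ w - g w| ≤ |φ w - a n w| + |a n w - g w| := abs_sub_le _ _ _
      _ < δ / 2 + δ / 2 := by
          have h1' : |φ w - a n w| < δ / 2 := abs_sub_comm (a n w) (φ w) ▸ h1
          linarith
      _ = δ := by ring
  -- Claim C
  have hC0 : ∀ x ∈ D, φ x = g x := by
    intro x hx
    have hnetx : ∀ n, ∃ y, y ∈ F n ∧
        (|g x - g y| < 1 / (n + 1) ∧ ∀ i < n, |a i x - a i y| < 1 / (n + 1)) := by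
      intro n
      obtain ⟨y, h1, h2⟩ := hnet n x hx
      exact ⟨y, h1, h2⟩
    choose y hyF hyprop using hnetx
    have hyg : ∀ n, |g x - g (y n)| < 1 / (n + 1) := fun n => (hyprop n).1
    have hya : ∀ n, ∀ i < n, |a i x - a i (y n)| < 1 / (n + 1) := fun n => (hyprop n).2
    have hyD : ∀ n, y n ∈ D := fun n => hFD n (Finset.mem_coe.2 (hyF n))
    obtain ⟨p, hpD, hpcl⟩ := hcldX y hyD
    -- d1
    have hd1 : ∀ i, a i p = a i x := by
      intro i
      apply eq_of_abs_sub_lt'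
      intro δ hδ
      have hci : Continuous (a i) := hBc _ (hAB (haA i))
      have hV : IsOpen {z | |a i z - a i p| < δ / 2} := by
        have : {z | |a i z - a i p| < δ / 2} = a i ⁻¹' Metric.ball (a i p) (δ / 2) := by
          ext z; simp [Real.dist_eq]
        rw [this]
        exact Metric.isOpen_ball.preimage hci
      obtain ⟨N, hN⟩ := one_div_small (half_pos hδ)
      obtain ⟨n, hn, hNn⟩ := exists_ge_of_infinite _
        (hpcl _ hV (by simpa using half_pos hδ)) (max N (i + 1))
      have h1 : |a i (y n) - a i p| < δ / 2 := hn
      have h2 : |a i x - a i (y n)| < 1 / (n + 1) :=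
        hya n i (lt_of_lt_of_le (Nat.lt_succ_self i) (le_trans (le_max_right N (i + 1)) hNn))
      have h2' : |a i x - a i (y n)| < δ / 2 :=
        lt_trans h2 (hN n (le_trans (le_max_left N (i + 1)) hNn))
      calc |a i p - a i x| ≤ |a i p - a i (y n)| + |a i (y n) - a i x| := abs_sub_le _ _ _
        _ < δ / 2 + δ / 2 := by
            have h1' : |a i p - a i (y n)| < δ / 2 := abs_sub_comm (a i (y n)) (a i p) ▸ h1
            have h2'' : |a i (y n) - a i x| < δ / 2 := abs_sub_comm (a i x) (a i (y n)) ▸ h2'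
            linarith
        _ = δ := by ring
    -- d2
    have hd2 : g p = g x := by
      apply eq_of_abs_sub_lt'
      intro δ hδ
      have hgp : ContinuousWithinAt g D p := hgD p hpD
      have hmem : {z | |g z - g p| < δ / 2} ∈ nhdsWithin p D := by
        have := Metric.tendsto_nhds.1 hgp (δ / 2) (half_pos hδ)
        filter_upwards [this] with z hz
        simpa [Real.dist_eq] using hz
      obtain ⟨V, hVo, hpV, hVsub⟩ := mem_nhdsWithin.1 hmem
      obtain ⟨N, hN⟩ := one_div_small (half_pos hδ)
      obtain ⟨n, hn, hNn⟩ := exists_ge_of_infinite _ (hpcl V hVo hpV) N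
      have h1 : |g (y n) - g p| < δ / 2 := hVsub ⟨hn, hyD n⟩
      have h2 : |g x - g (y n)| < δ / 2 := lt_trans (hyg n) (hN n hNn)
      calc |g p - g x| ≤ |g p - g (y n)| + |g (y n) - g x| := abs_sub_le _ _ _
        _ < δ / 2 + δ / 2 := by
            have h1' : |g p - g (y n)| < δ / 2 := abs_sub_comm (g (y n)) (g p) ▸ h1
            have h2' : |g (y n) - g x| < δ / 2 := abs_sub_comm (g x) (g (y n)) ▸ h2
            linarith
        _ = δ := by ring
    -- d3
    have hd3 : φ p = g p := by
      apply eq_of_abs_sub_lt'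
      intro δ hδ
      have hVφ : IsOpen {z | |φ z - φ p| < δ / 2} := by
        have : {z | |φ z - φ p| < δ / 2} = φ ⁻¹' Metric.ball (φ p) (δ / 2) := by
          ext z; simp [Real.dist_eq]
        rw [this]
        exact Metric.isOpen_ball.preimage hφc
      have hgp : ContinuousWithinAt g D p := hgD p hpD
      have hmem : {z | |g z - g p| < δ / 2} ∈ nhdsWithin p D := by
        have := Metric.tendsto_nhds.1 hgp (δ / 2) (half_pos hδ)
        filter_upwards [this] with z hz
        simpa [Real.dist_eq] using hz
      obtain ⟨V, hVo, hpV, hVsub⟩ := mem_nhdsWithin.1 hmem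
      have hWo : IsOpen ({z | |φ z - φ p| < δ / 2} ∩ V) := hVφ.inter hVo
      have hpW : p ∈ {z | |φ z - φ p| < δ / 2} ∩ V := ⟨by simpa using half_pos hδ, hpV⟩
      obtain ⟨n, hn⟩ := (hpcl _ hWo hpW).nonempty
      have h1 : |φ (y n) - φ p| < δ / 2 := hn.1
      have h2 : |g (y n) - g p| < δ / 2 := hVsub ⟨hn.2, hyD n⟩
      have h3 : φ (y n) = g (y n) := hB0 n (y n) (hyF n)
      calc |φ p - g p| ≤ |φ p - φ (y n)| + |φ (y n) - g p| := abs_sub_le _ _ _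
        _ < δ / 2 + δ / 2 := by
            have h1' : |φ p - φ (y n)| < δ / 2 := abs_sub_comm (φ (y n)) (φ p) ▸ h1
            have h4 : |φ (y n) - g p| < δ / 2 := by rw [h3]; exact h2
            linarith
        _ = δ := by ring
    -- d4
    have hd4 : φ x = φ p := by
      apply eq_of_abs_sub_lt'
      intro δ hδ
      obtain ⟨n, hn⟩ := (hφfin {x, p} (half_pos hδ)).nonempty
      have h1 : |a n x - φ x| < δ / 2 := hn x (by simp)
      have h2 : |a n p - φ p| < δ / 2 := hn p (by simp)
      have h3 : a n p = a n x := hd1 n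
      rw [h3] at h2
      calc |φ x - φ p| ≤ |φ x - a n x| + |a n x - φ p| := abs_sub_le _ _ _
        _ < δ / 2 + δ / 2 := by
            have h1' : |φ x - a n x| < δ / 2 := abs_sub_comm (a n x) (φ x) ▸ h1
            linarith
        _ = δ := by ring
    rw [hd4, hd3, hd2]
  exact ⟨φ, hφB, fun x hx => hC0 x hx, hA0⟩

private lemma closure_subset_B
    (hdense : Dense D)
    (hBc : ∀ φ ∈ B, Continuous φ) (hAB : A ⊆ B)
    (hclf : ∀ a : ℕ → X → ℝ, (∀ n, a n ∈ A) →
      ∃ φ ∈ B, ∀ U : Set (X → ℝ), IsOpen U → φ ∈ U → {n | a n ∈ U}.Infinite)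
    (hcld : ∀ d : ℕ → D, ∃ p : D, ∀ U : Set D, IsOpen U → p ∈ U → {n | d n ∈ U}.Infinite) :
    closure A ⊆ B := by
  intro g hg
  by_cases hX : Nonempty X
  · obtain ⟨x₁⟩ := hX
    obtain ⟨φ, hφB, hφD, hφx⟩ := key_lemma hBc hAB hclf hcld hg x₁
    suffices hgφ : g = φ by
      rw [hgφ]
      exact hφB
    funext x
    obtain ⟨ψ, hψB, hψD, hψx⟩ := key_lemma hBc hAB hclf hcld hg x
    have hψφ : ψ = φ :=
      Continuous.ext_on hdense (hBc ψ hψB) (hBc φ hφB)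
        fun z hz => (hψD hz).trans (hφD hz).symm
    rw [← hψx, hψφ]
  · have hA_ne : A.Nonempty := by
      rcases Set.eq_empty_or_nonempty A with h | h
      · rw [h, closure_empty] at hg
        exact absurd hg (Set.notMem_empty g)
      · exact h
    obtain ⟨f, hf⟩ := hA_ne
    have hgf : g = f := funext fun x => (hX ⟨x⟩).elim
    rw [hgf]
    exact hAB hf

end Groth

/-- A completely regular Hausdorff space with a dense countably compact
subspace is Grothendieck: `Cp(X)` is a hereditary g-space. -/
theorem grothendieck_of_dense_countablyCompact
    {X : Type*} [TopologicalSpace X] [CompletelyRegularSpace X] [T2Space X]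
    (D : Set X) (hdense : Dense D) (hcc : CountablyCompactSpace' D) :
    IsHereditaryGSpace (Cp X) := by
  classical
  intro Bb Aa hccA
  -- cluster extraction in D
  have hcld : ∀ d : ℕ → D, ∃ p : D, ∀ U : Set D, IsOpen U → p ∈ U → {n | d n ∈ U}.Infinite :=
    fun d => cluster_of_cc hcc d
  -- the two-step embedding
  set ι : Bb → (X → ℝ) := fun b => (b : Cp X).1 with hιdef
  have h1 : Topology.IsEmbedding (Subtype.val : Bb → Cp X) := Topology.IsEmbedding.subtypeVal
  have h2 : Topology.IsEmbedding (Subtype.val : {f : X → ℝ // Continuous f} → (X → ℝ)) :=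
    Topology.IsEmbedding.subtypeVal
  have hemb : Topology.IsEmbedding ι := h2.comp h1
  have hιinj : Function.Injective ι := hemb.injective
  set Abar : Set (X → ℝ) := ι '' Aa with hAbar
  set Bbar : Set (X → ℝ) := (Subtype.val : Cp X → (X → ℝ)) '' Bb with hBbar
  have hAB : Abar ⊆ Bbar := by
    rintro _ ⟨b, hb, rfl⟩
    exact ⟨b.1, b.2, rfl⟩
  have hBc : ∀ φ ∈ Bbar, Continuous φ := by
    rintro _ ⟨b, hb, rfl⟩
    exact b.2
  have hrange : Set.range ι = Bbar := by
    ext c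
    constructor
    · rintro ⟨b, rfl⟩
      exact ⟨b.1, b.2, rfl⟩
    · rintro ⟨b, hb, rfl⟩
      exact ⟨⟨b, hb⟩, rfl⟩
  -- countable compactness transferred to the function space level
  have hccPi : ∀ S ⊆ Abar, S.Infinite → ∃ φ ∈ Bbar,
      ∀ U : Set (X → ℝ), IsOpen U → φ ∈ U → (S ∩ U).Infinite := by
    intro S hSA hSinf
    set S₀ : Set Bb := {b | b ∈ Aa ∧ ι b ∈ S} with hS₀
    have hS₀img : ι '' S₀ = S := by
      apply Set.Subset.antisymm
      · rintro _ ⟨b, ⟨_, hbS⟩, rfl⟩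
        exact hbS
      · intro s hs
        obtain ⟨b, hbA, rfl⟩ := hSA hs
        exact ⟨b, ⟨hbA, hs⟩, rfl⟩
    have hS₀inf : S₀.Infinite := by
      intro hfin
      rw [← hS₀img] at hSinf
      exact hSinf (hfin.image ι)
    obtain ⟨φ₀, _, hφ₀⟩ := hccA S₀ (fun b hb => hb.1) hS₀inf
    refine ⟨ι φ₀, ⟨φ₀.1, φ₀.2, rfl⟩, ?_⟩
    intro U hU hφU
    have hpre := hφ₀ (ι ⁻¹' U) (hU.preimage hemb.continuous) hφU
    have hsub : ι '' (S₀ ∩ ι ⁻¹' U) ⊆ S ∩ U := by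
      rintro _ ⟨b, ⟨hbS₀, hbU⟩, rfl⟩
      exact ⟨hS₀img ▸ ⟨b, hbS₀, rfl⟩, hbU⟩
    exact Set.Infinite.mono hsub (hpre.image (hιinj.injOn))
  have hclf := cluster_fn hAB hccPi
  -- pointwise boundedness
  have hbdd : ∀ x : X, ∃ M : ℝ, ∀ f ∈ Abar, |f x| ≤ M := by
    intro x
    by_contra hub
    push_neg at hub
    have hseq : ∀ n : ℕ, ∃ f, f ∈ Abar ∧ (n : ℝ) < |f x| := by
      intro n
      obtain ⟨f, hf, h⟩ := hub n
      exact ⟨f, hf, h⟩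
    choose b hbA hbx using hseq
    obtain ⟨φ, _, hφcl⟩ := hclf b hbA
    have hU : IsOpen {h : X → ℝ | ∀ z ∈ ({x} : Finset X), |h z - φ z| < 1} :=
      isOpen_ball_pi {x} φ 1
    have hinf := hφcl _ hU (fun z _ => by simp)
    obtain ⟨C, hC⟩ := exists_nat_gt (|φ x| + 1)
    obtain ⟨n, hn, hCn⟩ := exists_ge_of_infinite _ hinf C
    have h1 : |b n x - φ x| < 1 := hn x (by simp)
    have h2 : |b n x| ≤ |b n x - φ x| + |φ x| := by
      calc |b n x| = |(b n x - φ x) + φ x| := by ring_nf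
        _ ≤ |b n x - φ x| + |φ x| := abs_add_le _ _
    have h3 : (C : ℝ) ≤ (n : ℝ) := Nat.cast_le.2 hCn
    have h4 : (n : ℝ) < |b n x| := hbx n
    linarith
  -- compactness of the closure in the product space
  have hKc : IsCompact (closure Abar) := by
    choose M hM using hbdd
    have hsub : closure Abar ⊆ Set.pi Set.univ fun x => Set.Icc (-(M x)) (M x) := by
      apply closure_minimal
      · intro f hf x _
        rw [Set.mem_Icc]
        exact abs_le.1 (hM x f hf)
      · exact isClosed_set_pi fun x _ => isClosed_Icc
    exact IsCompact.of_isClosed_subset (isCompact_univ_pi fun x => isCompact_Icc)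
      isClosed_closure hsub
  -- the closure consists of elements of (the image of) B
  have hKB : closure Abar ⊆ Bbar :=
    closure_subset_B hdense hBc hAB hclf hcld
  -- transfer compactness back through the embedding
  have hcleq : closure Aa = ι ⁻¹' closure Abar :=
    hemb.closure_eq_preimage_closure_image Aa
  rw [hemb.isCompact_iff] at *
  rw [hcleq]
  have himg : ι '' (ι ⁻¹' closure Abar) = closure Abar :=
    Set.image_preimage_eq_of_subset (by rw [hrange]; exact hKB)
  rw [himg]
  exact hKc
end

section
/- For an infinite completely regular Hausdorff space X, the space Cp(X) is second countable if and only if X is countable, and Cp(X) is first countable if and only if X is countable. -/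
open Set Filter Topology

theorem countable_of_cp_firstCountable
    {X : Type*} [TopologicalSpace X] [CompletelyRegularSpace X] [T2Space X]
    (h : FirstCountableTopology (Cp X)) : Countable X := by
  haveI := h
  set z : Cp X := ⟨fun _ => (0:ℝ), continuous_const⟩ with hz
  obtain ⟨U, hU⟩ := (𝓝 z).exists_antitone_basis
  -- for each n, find a finite set F n and entourage data
  have key : ∀ n, ∃ F : Set X, F.Finite ∧
      ∀ g : Cp X, (∀ i ∈ F, g.1 i = 0) → g ∈ U n := by
    intro n
    have hUn : U n ∈ 𝓝 z := hU.mem n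
    rw [show (𝓝 z : Filter (Cp X)) = Filter.comap (fun g : Cp X => g.1) (𝓝 z.1) from
      nhds_induced (fun g : Cp X => g.1) z] at hUn
    obtain ⟨V, hV, hVU⟩ := Filter.mem_comap.1 hUn
    rw [nhds_pi, Filter.mem_pi] at hV
    obtain ⟨I, hIfin, t, ht, htV⟩ := hV
    refine ⟨I, hIfin, fun g hg => ?_⟩
    apply hVU
    apply htV
    intro i hi
    have h0 : (0:ℝ) ∈ t i := mem_of_mem_nhds (ht i)
    simpa [hg i hi] using h0
  choose F hFfin hF using key
  have hcov : (Set.univ : Set X) ⊆ ⋃ n, F n := by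
    intro x _
    by_contra hx
    simp only [Set.mem_iUnion, not_exists] at hx
    -- neighborhood of z : functions with |f x| < 1
    have hWopen : IsOpen {u : Cp X | |u.1 x| < 1} := by
      have : Continuous fun u : Cp X => |u.1 x| :=
        ((continuous_apply x).comp continuous_subtype_val).abs
      exact isOpen_lt this continuous_const
    have hWz : z ∈ {u : Cp X | |u.1 x| < 1} := by show |(0:ℝ)| < 1; norm_num
    obtain ⟨n, hn⟩ := hU.mem_iff.1 (hWopen.mem_nhds hWz)
    -- x ∉ F n which is closed
    have hclosed : IsClosed (F n) := (hFfin n).isClosed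
    obtain ⟨f, hfc, hfx, hfK⟩ :=
      CompletelyRegularSpace.completely_regular x (F n) hclosed (hx n)
    set g : Cp X := ⟨fun y => 2 * (1 - (f y : ℝ)), by
      have : Continuous fun y => (f y : ℝ) := continuous_subtype_val.comp hfc
      continuity⟩ with hgdef
    have hg : g ∈ U n := by
      apply hF n
      intro i hi
      have : f i = 1 := hfK hi
      simp [hgdef, this]
    have := hn hg
    simp only [Set.mem_setOf_eq, hgdef] at this
    have h2 : |2 * (1 - ((f x : ℝ)))| < 1 := this
    rw [hfx] at h2
    norm_num at h2
  have : Set.Countable (Set.univ : Set X) :=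
    Set.Countable.mono hcov (Set.countable_iUnion fun n => (hFfin n).countable)
  exact Set.countable_univ_iff.1 this

/-- For an infinite completely regular Hausdorff space `X`, `Cp(X)` is
second countable iff `X` is countable, and `Cp(X)` is first countable iff `X` is
countable. -/
theorem cp_secondCountable_and_firstCountable_iff_countable
    {X : Type*} [TopologicalSpace X] [CompletelyRegularSpace X] [T2Space X]
    [Infinite X] :
    (SecondCountableTopology (Cp X) ↔ Countable X) ∧
    (FirstCountableTopology (Cp X) ↔ Countable X) := by
  have hcs : Countable X → SecondCountableTopology (Cp X) := by
    intro hc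
    haveI := hc
    exact TopologicalSpace.secondCountableTopology_induced {f : X → ℝ // Continuous f} (X → ℝ) Subtype.val
  have hsf : SecondCountableTopology (Cp X) → FirstCountableTopology (Cp X) := by
    intro h
    haveI := h
    infer_instance
  constructor
  · exact ⟨fun h => countable_of_cp_firstCountable (hsf h), hcs⟩
  · exact ⟨fun h => countable_of_cp_firstCountable h, fun h => hsf (hcs h)⟩
end
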